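/- An algebraic integer in ℂ all of whose Galois conjugates have absolute value one is a root of unity (Kronecker's theorem). -/

import Mathlib

/-- Kronecker's theorem: an algebraic integer in `ℂ` all of whose Galois
conjugates (roots of its minimal polynomial over `ℚ`) have absolute value one
is a root of unity. -/
theorem stmt_15 (z : ℂ) (hz : IsIntegral ℤ z)
    (hconj : ∀ w : ℂ, Polynomial.aeval w (minpoly ℚ z) = 0 → ‖w‖ = 1) :
    ∃ k : ℕ, 0 < k ∧ z ^ k = 1 := by
  set K := IntermediateField.adjoin ℚ ({z} : Set ℂ)
  have hzalg : IsIntegral ℚ z := hz.tower_top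
  have : FiniteDimensional ℚ K :=
    IntermediateField.adjoin.finiteDimensional hzalg
  have : NumberField K := ⟨⟩
  set x : K := IntermediateField.AdjoinSimple.gen ℚ z with hx
  have hxz : algebraMap K ℂ x = z := rfl
  have hxi : IsIntegral ℤ x := by
    rwa [← isIntegral_algebraMap_iff (algebraMap K ℂ).injective, hxz]
  have hmin : minpoly ℚ x = minpoly ℚ z := by
    rw [← minpoly.algebraMap_eq (algebraMap K ℂ).injective x, hxz]
  have hnorm : ∀ φ : K →+* ℂ, ‖φ x‖ = 1 := by
    intro φ
    have hφ : Polynomial.aeval (φ x) (minpoly ℚ z) = 0 := by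
      rw [← hmin]
      have h := Polynomial.aeval_algHom_apply φ.toRatAlgHom x (minpoly ℚ x)
      rw [show (φ x : ℂ) = φ.toRatAlgHom x from rfl, h, minpoly.aeval, map_zero]
    simpa using hconj (φ x) hφ
  obtain ⟨n, hn, hpow⟩ := NumberField.Embeddings.pow_eq_one_of_norm_eq_one K ℂ hxi hnorm
  refine ⟨n, hn, ?_⟩
  have := congrArg (algebraMap K ℂ) hpow
  rwa [map_pow, hxz, map_one] at this
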